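/- For every n ≥ 1, every 2-factor of the graph H_n that contains the edge v_0 v_n is a Hamiltonian cycle; moreover, every such 2-factor contains all the edges v_i v_{2n-i} for 1 ≤ i < n. -/

import Mathlib

open SimpleGraph

/-- `H` is a minor of `G`. -/
def SimpleGraph.IsMinorOf {U V : Type*} (H : SimpleGraph U) (G : SimpleGraph V) : Prop :=
  ∃ φ : U → Set V,
    (∀ u, (G.induce (φ u)).Connected) ∧
    (∀ u u', u ≠ u' → Disjoint (φ u) (φ u')) ∧
    (∀ u u', H.Adj u u' → ∃ a ∈ φ u, ∃ b ∈ φ u', G.Adj a b)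

/-- Planarity via Wagner's theorem: no `K₅` and no `K₃,₃` minor. -/
def SimpleGraph.IsPlanar {V : Type*} (G : SimpleGraph V) : Prop :=
  ¬ (completeGraph (Fin 5)).IsMinorOf G ∧
  ¬ (completeBipartiteGraph (Fin 3) (Fin 3)).IsMinorOf G

def SimpleGraph.IsCubic {V : Type*} (G : SimpleGraph V) : Prop :=
  ∀ v, (G.neighborSet v).ncard = 3

/-- Removing the edge set `s` increases the number of components. -/
def SimpleGraph.Disconnects {V : Type*} (G : SimpleGraph V) (s : Set (Sym2 V)) : Prop :=
  ∃ x y : V, G.Reachable x y ∧ ¬ (G.deleteEdges s).Reachable x y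

def SimpleGraph.TwoEdgeConnected {V : Type*} (G : SimpleGraph V) : Prop :=
  G.Connected ∧ ∀ e : Sym2 V, ¬ G.Disconnects {e}

/-- A 2-factor: spanning 2-regular subgraph. -/
def SimpleGraph.Subgraph.IsTwoFactor {V : Type*} {G : SimpleGraph V} (F : G.Subgraph) : Prop :=
  F.IsSpanning ∧ ∀ v, (F.neighborSet v).ncard = 2

/-- `uv` is a chord of some cycle contained in a 2-factor of `G`. -/
def SimpleGraph.IsChordOfTwoFactorCycle {V : Type*} (G : SimpleGraph V) (u v : V) : Prop :=
  ∃ F : G.Subgraph, F.IsTwoFactor ∧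
    ∃ p : F.spanningCoe.Walk u u, p.IsCycle ∧ v ∈ p.support ∧ s(u, v) ∉ p.edges

def SimpleGraph.IsCycleEdgeSet {V : Type*} [DecidableEq V] (G : SimpleGraph V)
    (f : Finset (Sym2 V)) : Prop :=
  ∃ (x : V) (p : G.Walk x x), p.IsCycle ∧ f = p.edges.toFinset

/-- A face (given by its boundary edges) is monochromatic under the coloring `c`. -/
def FaceMono {V α : Type*} (c : V → α) (f : Finset (Sym2 V)) : Prop :=
  ∃ k, ∀ e ∈ f, ∀ x ∈ e, c x = k

/-- The graph `Hₙ`: the cycle `v₀, v₁, …, v_{2n-1}` (vertices `ZMod (2*n)`) together with the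
edge `v₀ vₙ` and the edges `vᵢ v_{2n-i}` for `1 ≤ i < n`. -/
def Hgraph (n : ℕ) : SimpleGraph (ZMod (2 * n)) where
  Adj i j := i ≠ j ∧ (i = j + 1 ∨ j = i + 1 ∨ i + j = 0 ∨
      (i = 0 ∧ j = (n : ZMod (2 * n))) ∨ (j = 0 ∧ i = (n : ZMod (2 * n))))
  symm := by
    constructor
    rintro i j ⟨hne, h⟩
    refine ⟨hne.symm, ?_⟩
    rcases h with h | h | h | h | h
    · exact Or.inr (Or.inl h)
    · exact Or.inl h
    · exact Or.inr (Or.inr (Or.inl (by rw [add_comm]; exact h)))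
    · exact Or.inr (Or.inr (Or.inr (Or.inr h)))
    · exact Or.inr (Or.inr (Or.inr (Or.inl h)))
  loopless := ⟨fun i h => h.1 rfl⟩



namespace HAux
variable {n : ℕ}

lemma cast_inj (hn : 1 ≤ n) {a b : ℕ} (ha : a < 2*n) (hb : b < 2*n) :
    (a : ZMod (2*n)) = (b : ZMod (2*n)) ↔ a = b := by
  haveI : NeZero (2*n) := ⟨by omega⟩
  constructor
  · intro h
    have := congrArg ZMod.val h
    rwa [ZMod.val_cast_of_lt ha, ZMod.val_cast_of_lt hb] at this
  · rintro rfl; rfl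

lemma no_half (v : ZMod (2*n)) : v + v ≠ 1 := by
  intro h
  have h2 := congrArg (ZMod.castHom (dvd_mul_right 2 n) (ZMod 2)) h
  simp only [map_add, map_one] at h2
  have hz : ∀ x : ZMod 2, x + x = 0 := by decide
  rw [hz] at h2
  exact (by decide : (0 : ZMod 2) ≠ 1) h2

lemma no_half' (v : ZMod (2*n)) : v + v ≠ -1 := by
  intro h
  have : (-v) + (-v) = 1 := by rw [← neg_add, h]; ring
  exact no_half _ this

lemma two_ne_zero' (hn : 2 ≤ n) : (2 : ZMod (2*n)) ≠ 0 := by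
  have : ((2:ℕ) : ZMod (2*n)) ≠ ((0:ℕ) : ZMod (2*n)) := by
    rw [Ne, cast_inj (by omega) (by omega) (by omega)]; omega
  simpa using this

lemma n_cast_ne_zero (hn : 1 ≤ n) : (n : ZMod (2*n)) ≠ 0 := by
  have : ((n:ℕ) : ZMod (2*n)) ≠ ((0:ℕ) : ZMod (2*n)) := by
    rw [Ne, cast_inj (by omega) (by omega) (by omega)]; omega
  simpa using this

lemma neg_n (hn : 1 ≤ n) : -(n : ZMod (2*n)) = (n : ZMod (2*n)) := by
  have h : (n : ZMod (2*n)) + (n : ZMod (2*n)) = 0 := by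
    have : ((2*n : ℕ) : ZMod (2*n)) = 0 := ZMod.natCast_self _
    push_cast [two_mul] at this
    exact this
  rw [neg_eq_iff_add_eq_zero]; exact h

lemma deg2 {V : Type*} {G : SimpleGraph V} {F : G.Subgraph} {v x y z : V}
    (hxy : x ≠ y) (hxz : x ≠ z) (hyz : y ≠ z)
    (hsub : F.neighborSet v ⊆ {x, y, z})
    (hcard : (F.neighborSet v).ncard = 2) :
    ((F.Adj v x ∧ F.Adj v y) ∨ (F.Adj v x ∧ F.Adj v z) ∨ (F.Adj v y ∧ F.Adj v z)) ∧
      ¬ (F.Adj v x ∧ F.Adj v y ∧ F.Adj v z) := by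
  obtain ⟨a, b, hab, hN⟩ := Set.ncard_eq_two.mp hcard
  have ha : a ∈ ({x, y, z} : Set V) := hsub (by rw [hN]; left; rfl)
  have hb : b ∈ ({x, y, z} : Set V) := hsub (by rw [hN]; right; rfl)
  have hAdj : ∀ w, F.Adj v w ↔ w = a ∨ w = b := by
    intro w
    have h0 : F.Adj v w ↔ w ∈ F.neighborSet v := Iff.rfl
    rw [h0, hN]; simp
  simp only [Set.mem_insert_iff, Set.mem_singleton_iff] at ha hb
  constructor
  · rcases ha with rfl | rfl | rfl <;> rcases hb with rfl | rfl | rfl <;>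
      simp_all [hAdj]
  · rintro ⟨h1, h2, h3⟩
    rw [hAdj] at h1 h2 h3
    rcases h1 with rfl | rfl <;> rcases h2 with h2 | h2 <;> rcases h3 with h3 | h3 <;>
      simp_all

lemma nbhd_zero :
    (Hgraph n).neighborSet 0 ⊆ {1, -1, (n : ZMod (2*n))} := by
  rintro u ⟨hne, h⟩
  simp only [Set.mem_insert_iff, Set.mem_singleton_iff]
  rcases h with h | h | h | ⟨-, h⟩ | ⟨h, -⟩
  · right; left; linear_combination -h
  · left; linear_combination h
  · exfalso; apply hne; linear_combination -h
  · right; right; exact h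
  · exact absurd h.symm hne

lemma nbhd_generic (v : ZMod (2*n)) (hv0 : v ≠ 0) (hvn : v ≠ n) :
    (Hgraph n).neighborSet v ⊆ {v - 1, v + 1, -v} := by
  rintro u ⟨hne, h⟩
  simp only [Set.mem_insert_iff, Set.mem_singleton_iff]
  rcases h with h | h | h | ⟨h, -⟩ | ⟨-, h⟩
  · left; linear_combination -h
  · right; left; exact h
  · right; right; linear_combination h
  · exact absurd h hv0
  · exact absurd h hvn

variable {F : (Hgraph n).Subgraph}

lemma deg_zero (hn : 2 ≤ n) (hF : F.IsTwoFactor) :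
    ((F.Adj 0 1 ∧ F.Adj 0 (-1)) ∨ (F.Adj 0 1 ∧ F.Adj 0 n) ∨ (F.Adj 0 (-1) ∧ F.Adj 0 n)) ∧
      ¬ (F.Adj 0 1 ∧ F.Adj 0 (-1) ∧ F.Adj 0 (n : ZMod (2*n))) := by
  have h1 : (1 : ZMod (2*n)) ≠ -1 := by
    intro h
    exact two_ne_zero' hn (by linear_combination h)
  have h2 : (1 : ZMod (2*n)) ≠ n := by
    have : ((1:ℕ) : ZMod (2*n)) ≠ ((n:ℕ) : ZMod (2*n)) := by
      rw [Ne, cast_inj (by omega) (by omega) (by omega)]; omega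
    simpa using this
  have h3 : (-1 : ZMod (2*n)) ≠ n := by
    intro h
    have : ((n+1 : ℕ) : ZMod (2*n)) = ((0:ℕ) : ZMod (2*n)) := by
      push_cast
      linear_combination -h
    rw [cast_inj (by omega) (by omega) (by omega)] at this
    omega
  exact deg2 h1 h2 h3 ((F.neighborSet_subset 0).trans nbhd_zero) (hF.2 0)

lemma deg_generic (hn : 2 ≤ n) (hF : F.IsTwoFactor) (v : ZMod (2*n))
    (hv0 : v ≠ 0) (hvn : v ≠ n) :
    ((F.Adj v (v-1) ∧ F.Adj v (v+1)) ∨ (F.Adj v (v-1) ∧ F.Adj v (-v)) ∨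
      (F.Adj v (v+1) ∧ F.Adj v (-v))) ∧
      ¬ (F.Adj v (v-1) ∧ F.Adj v (v+1) ∧ F.Adj v (-v)) := by
  have h1 : v - 1 ≠ v + 1 := by
    intro h
    exact two_ne_zero' hn (by linear_combination -h)
  have h2 : v - 1 ≠ -v := by
    intro h
    exact no_half v (by linear_combination h)
  have h3 : v + 1 ≠ -v := by
    intro h
    exact no_half' v (by linear_combination h)
  exact deg2 h1 h2 h3 ((F.neighborSet_subset v).trans (nbhd_generic v hv0 hvn)) (hF.2 v)


lemma key (hn : 2 ≤ n) (hF : F.IsTwoFactor)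
    (h0n : F.Adj 0 (n : ZMod (2*n))) (h01 : F.Adj 0 1) :
    ∀ j : ℕ, j ≤ n - 1 →
      (F.Adj (j : ZMod (2*n)) ((j : ZMod (2*n)) + 1) ↔ Even j) ∧
      (F.Adj (-(j : ZMod (2*n))) (-(j : ZMod (2*n)) - 1) ↔ ¬ Even j) ∧
      (1 ≤ j → F.Adj (j : ZMod (2*n)) (-(j : ZMod (2*n)))) := by
  intro j
  induction j with
  | zero =>
    intro _
    refine ⟨by simpa using h01, ?_, by omega⟩
    have hneg : ¬ F.Adj 0 (-1) := fun hneg => (deg_zero hn hF).2 ⟨h01, hneg, h0n⟩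
    simp [hneg]
  | succ j ih =>
    intro hle
    obtain ⟨ha, hb, -⟩ := ih (by omega)
    set x := (j : ZMod (2*n)) with hxdef
    have c1 : ((j+1 : ℕ) : ZMod (2*n)) = x + 1 := by push_cast; ring
    have hw0 : ((j+1 : ℕ) : ZMod (2*n)) ≠ 0 := by
      have : ((j+1:ℕ) : ZMod (2*n)) ≠ ((0:ℕ) : ZMod (2*n)) := by
        rw [Ne, cast_inj (by omega) (by omega) (by omega)]; omega
      simpa using this
    have hwn : ((j+1 : ℕ) : ZMod (2*n)) ≠ (n : ZMod (2*n)) := by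
      rw [Ne, cast_inj (by omega) (by omega) (by omega)]; omega
    have hW := deg_generic hn hF ((j+1:ℕ) : ZMod (2*n)) hw0 hwn
    have hM := deg_generic hn hF (-((j+1:ℕ) : ZMod (2*n)))
      (neg_ne_zero.mpr hw0) (by rw [Ne, neg_eq_iff_eq_neg, neg_n (by omega)]; exact hwn)
    rw [c1] at hW hM ⊢
    have c2 : x + 1 - 1 = x := by ring
    have c4 : -(x + 1) + 1 = -x := by ring
    have c5 : -(-(x + 1)) = x + 1 := by ring
    have c6 : -(x + 1) = -x - 1 := by ring
    rw [c2] at hW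
    rw [c4, c5] at hM
    -- hW : exactly two of  F.Adj (x+1) x , F.Adj (x+1) (x+1+1) , F.Adj (x+1) (-(x+1))
    -- hM : exactly two of  F.Adj (-(x+1)) (-(x+1)-1) , F.Adj (-(x+1)) (-x) , F.Adj (-(x+1)) (x+1)
    have hQ2 : F.Adj (-(x+1)) (-x) ↔ F.Adj (-x) (-x - 1) := by
      rw [SimpleGraph.Subgraph.adj_comm, c6]
    have hP1 : F.Adj (x+1) x ↔ F.Adj x (x + 1) := SimpleGraph.Subgraph.adj_comm _ _ _
    have hQ3 : F.Adj (-(x+1)) (x+1) ↔ F.Adj (x+1) (-(x+1)) := SimpleGraph.Subgraph.adj_comm _ _ _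
    by_cases hev : Even j
    · have haj : F.Adj x (x + 1) := ha.mpr hev
      have hbj : ¬ F.Adj (-x) (-x - 1) := fun h => (hb.mp h) hev
      have hq2 : ¬ F.Adj (-(x+1)) (-x) := fun h => hbj (hQ2.mp h)
      have hq1q3 : F.Adj (-(x+1)) (-(x+1)-1) ∧ F.Adj (-(x+1)) (x+1) := by
        rcases hM.1 with ⟨h1, h2⟩ | ⟨h1, h2⟩ | ⟨h1, h2⟩
        · exact absurd h2 hq2
        · exact ⟨h1, h2⟩
        · exact absurd h1 hq2
      have hchord : F.Adj (x+1) (-(x+1)) := hQ3.mp hq1q3.2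
      have hnp2 : ¬ F.Adj (x+1) (x+1+1) := fun h => hW.2 ⟨hP1.mpr haj, h, hchord⟩
      refine ⟨?_, ?_, fun _ => hchord⟩
      · exact iff_of_false hnp2 (by simp [Nat.even_add_one, hev])
      · exact iff_of_true hq1q3.1 (by simp [Nat.even_add_one, hev])
    · have hbj : F.Adj (-x) (-x - 1) := hb.mpr hev
      have haj : ¬ F.Adj x (x + 1) := fun h => hev (ha.mp h)
      have hp1 : ¬ F.Adj (x+1) x := fun h => haj (hP1.mp h)
      have hp2p3 : F.Adj (x+1) (x+1+1) ∧ F.Adj (x+1) (-(x+1)) := by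
        rcases hW.1 with ⟨h1, h2⟩ | ⟨h1, h2⟩ | ⟨h1, h2⟩
        · exact absurd h1 hp1
        · exact absurd h1 hp1
        · exact ⟨h1, h2⟩
      have hchord : F.Adj (x+1) (-(x+1)) := hp2p3.2
      have hnq1 : ¬ F.Adj (-(x+1)) (-(x+1)-1) := fun h =>
        hM.2 ⟨h, hQ2.mpr hbj, hQ3.mpr hchord⟩
      refine ⟨?_, ?_, fun _ => hchord⟩
      · exact iff_of_true hp2p3.1 (by simp [Nat.even_add_one, hev])
      · exact iff_of_false hnq1 (by simp [Nat.even_add_one, hev])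

lemma reach (hn : 2 ≤ n) (hF : F.IsTwoFactor)
    (h0n : F.Adj 0 (n : ZMod (2*n))) (h01 : F.Adj 0 1) :
    ∀ k : ℕ, k ≤ n → F.spanningCoe.Reachable 0 (k : ZMod (2*n)) ∧
      F.spanningCoe.Reachable 0 (-(k : ZMod (2*n))) := by
  intro k
  induction k with
  | zero =>
    intro _
    constructor <;> · simp only [Nat.cast_zero, neg_zero]; exact SimpleGraph.Reachable.refl 0
  | succ k ih =>
    intro hle
    obtain ⟨ihp, ihm⟩ := ih (by omega)
    by_cases hkn : k + 1 = n
    · have hc : ((k+1 : ℕ) : ZMod (2*n)) = (n : ZMod (2*n)) := by rw [hkn]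
      rw [hc, neg_n (by omega)]
      have : F.spanningCoe.Adj 0 (n : ZMod (2*n)) := h0n
      exact ⟨this.reachable, this.reachable⟩
    · have hk1 : k + 1 ≤ n - 1 := by omega
      obtain ⟨ha, hb, -⟩ := key hn hF h0n h01 k (by omega)
      have hchord : F.Adj ((k+1:ℕ) : ZMod (2*n)) (-((k+1:ℕ) : ZMod (2*n))) :=
        (key hn hF h0n h01 (k+1) hk1).2.2 (by omega)
      have hcast : ((k+1 : ℕ) : ZMod (2*n)) = (k : ZMod (2*n)) + 1 := by push_cast; ring
      have hcast2 : -((k+1 : ℕ) : ZMod (2*n)) = -(k : ZMod (2*n)) - 1 := by push_cast; ring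
      by_cases hev : Even k
      · have hedge : F.spanningCoe.Adj ((k:ℕ) : ZMod (2*n)) ((k+1:ℕ) : ZMod (2*n)) := by
          rw [hcast]; exact ha.mpr hev
        have r1 : F.spanningCoe.Reachable 0 ((k+1:ℕ) : ZMod (2*n)) := ihp.trans hedge.reachable
        exact ⟨r1, r1.trans (SimpleGraph.Adj.reachable hchord)⟩
      · have hedge : F.spanningCoe.Adj (-((k:ℕ) : ZMod (2*n))) (-((k+1:ℕ) : ZMod (2*n))) := by
          rw [hcast2]; exact hb.mpr hev
        have r2 : F.spanningCoe.Reachable 0 (-((k+1:ℕ) : ZMod (2*n))) :=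
          ihm.trans hedge.reachable
        exact ⟨r2.trans (SimpleGraph.Adj.reachable (F.adj_symm hchord)), r2⟩

lemma main_case (hn : 2 ≤ n) (hF : F.IsTwoFactor)
    (h0n : F.Adj 0 (n : ZMod (2*n))) (h01 : F.Adj 0 1) :
    F.spanningCoe.Connected ∧
      ∀ i : ℕ, 1 ≤ i → i < n → F.Adj (i : ZMod (2*n)) (-(i : ZMod (2*n))) := by
  haveI : NeZero (2*n) := ⟨by omega⟩
  constructor
  · have hall : ∀ v : ZMod (2*n), F.spanningCoe.Reachable 0 v := by
      intro v
      have hv : ((v.val : ℕ) : ZMod (2*n)) = v := ZMod.natCast_rightInverse v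
      by_cases hle : v.val ≤ n
      · rw [← hv]; exact (reach hn hF h0n h01 v.val hle).1
      · have hvlt : v.val < 2*n := ZMod.val_lt v
        have hk : 2*n - v.val ≤ n := by omega
        have hkv : -(((2*n - v.val : ℕ)) : ZMod (2*n)) = v := by
          have hsum : ((2*n - v.val : ℕ) : ZMod (2*n)) + ((v.val : ℕ) : ZMod (2*n)) = 0 := by
            rw [← Nat.cast_add, Nat.sub_add_cancel (le_of_lt hvlt), ZMod.natCast_self]
          rw [hv] at hsum
          rw [neg_eq_iff_add_eq_zero]
          exact hsum
        rw [← hkv]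
        exact (reach hn hF h0n h01 _ hk).2
    have hpre : F.spanningCoe.Preconnected := fun u v => (hall u).symm.trans (hall v)
    exact SimpleGraph.Connected.mk hpre
  · intro i h1 h2
    exact (key hn hF h0n h01 i (by omega)).2.2 h1


lemma negAdj (hn : 1 ≤ n) {i j : ZMod (2*n)} (h : (Hgraph n).Adj i j) :
    (Hgraph n).Adj (-i) (-j) := by
  obtain ⟨hne, h⟩ := h
  refine ⟨by simpa using hne, ?_⟩
  rcases h with h | h | h | ⟨h1, h2⟩ | ⟨h1, h2⟩
  · right; left; linear_combination h
  · left; linear_combination h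
  · right; right; left; linear_combination -h
  · right; right; right; left
    refine ⟨by rw [h1, neg_zero], by rw [h2, neg_n hn]⟩
  · right; right; right; right
    refine ⟨by rw [h1, neg_zero], by rw [h2, neg_n hn]⟩

def negSub (hn : 1 ≤ n) (F : (Hgraph n).Subgraph) : (Hgraph n).Subgraph where
  verts := Set.univ
  Adj a b := F.Adj (-a) (-b)
  adj_sub := by
    intro a b h
    have := negAdj hn (F.adj_sub h)
    simpa using this
  edge_vert := fun _ => trivial
  symm := ⟨fun a b h => F.adj_symm h⟩

lemma negSub_twoFactor (hn : 1 ≤ n) (hF : F.IsTwoFactor) : (negSub hn F).IsTwoFactor := by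
  constructor
  · intro v; trivial
  · intro v
    have himg : (negSub hn F).neighborSet v = Neg.neg '' (F.neighborSet (-v)) := by
      ext w
      constructor
      · intro hw
        exact ⟨-w, hw, neg_neg w⟩
      · rintro ⟨u, hu, rfl⟩
        show F.Adj (-v) (- -u)
        rwa [neg_neg]
    rw [himg, Set.ncard_image_of_injective _ neg_injective]
    exact hF.2 (-v)

end HAux

/-- For every `n ≥ 1`, every 2-factor of `Hₙ` containing the edge `v₀ vₙ`
is a Hamiltonian cycle (i.e. connected), and it contains all the edges `vᵢ v_{2n-i}` for
`1 ≤ i < n`. -/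
theorem Hgraph_two_factor_through_central_edge
    (n : ℕ) (hn : 1 ≤ n) (F : (Hgraph n).Subgraph)
    (hF : F.IsTwoFactor) (he : s((0 : ZMod (2 * n)), (n : ZMod (2 * n))) ∈ F.edgeSet) :
    F.spanningCoe.Connected ∧
      ∀ i : ℕ, 1 ≤ i → i < n →
        s((i : ZMod (2 * n)), -(i : ZMod (2 * n))) ∈ F.edgeSet := by
  open HAux in
  by_cases hn1 : n = 1
  · exfalso
    subst hn1
    have hsub : F.neighborSet 0 ⊆ {1, -1, ((1:ℕ) : ZMod (2*1))} :=
      (F.neighborSet_subset 0).trans nbhd_zero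
    have hone : ({1, -1, ((1:ℕ) : ZMod (2*1))} : Set (ZMod (2*1))) = {1} := by
      have e1 : (-1 : ZMod (2*1)) = 1 := by decide
      have e2 : ((1:ℕ) : ZMod (2*1)) = 1 := by decide
      rw [e1, e2]; simp
    rw [hone] at hsub
    have hle := Set.ncard_le_ncard hsub (Set.finite_singleton 1)
    rw [Set.ncard_singleton, hF.2 0] at hle
    omega
  · have hn2 : 2 ≤ n := by omega
    have h0n : F.Adj 0 (n : ZMod (2*n)) := SimpleGraph.Subgraph.mem_edgeSet.mp he
    have hor : F.Adj 0 1 ∨ F.Adj 0 (-1) := by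
      rcases (deg_zero hn2 hF).1 with ⟨h1, -⟩ | ⟨h1, -⟩ | ⟨h1, -⟩
      · exact Or.inl h1
      · exact Or.inl h1
      · exact Or.inr h1
    rcases hor with h01 | h0m
    · obtain ⟨hc, hch⟩ := main_case hn2 hF h0n h01
      exact ⟨hc, fun i hi1 hi2 => SimpleGraph.Subgraph.mem_edgeSet.mpr (hch i hi1 hi2)⟩
    · set F' := negSub hn F with hF'def
      have hF' : F'.IsTwoFactor := negSub_twoFactor hn hF
      have h0n' : F'.Adj 0 (n : ZMod (2*n)) := by
        show F.Adj (-0) (-(n : ZMod (2*n)))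
        rwa [neg_zero, neg_n hn]
      have h01' : F'.Adj 0 1 := by
        show F.Adj (-0) (-1)
        rwa [neg_zero]
      obtain ⟨hc', hch'⟩ := main_case hn2 hF' h0n' h01'
      constructor
      · let hom : F'.spanningCoe →g F.spanningCoe :=
          ⟨fun w => -w, fun {a b} h => h⟩
        haveI : NeZero (2*n) := ⟨by omega⟩
        refine SimpleGraph.Connected.mk (fun u v => ?_)
        have h1 := (hc'.preconnected (-u) (-v)).map hom
        have h2 : hom (-u) = u := by show - -u = u; exact neg_neg u
        have h3 : hom (-v) = v := by show - -v = v; exact neg_neg v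
        rwa [h2, h3] at h1
      · intro i hi1 hi2
        have := hch' i hi1 hi2
        have h2 : F.Adj (-(i : ZMod (2*n))) (i : ZMod (2*n)) := by
          have h3 : F.Adj (-(i : ZMod (2*n))) (- -(i : ZMod (2*n))) := this
          rwa [neg_neg] at h3
        exact SimpleGraph.Subgraph.mem_edgeSet.mpr (F.adj_symm h2)
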